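/- Let (X_i, f_i) be an inverse sequence of compact metric spaces and let A_i ⊆ X_i be compact subsets with f_{i+1}(A_{i+1}) ⊆ A_i for all i. Let X = lim(X_i, f_i) and A = { x ∈ X : x_i ∈ A_i for all i }. For each i, let K_i be a nonempty collection of maps of pairs (X_{i+1}, A_{i+1}) → (X_i, A_i), and suppose that for every i and every ε > 0 there exists g ∈ K_i with sup_{x ∈ X_{i+1}} dist(f_{i+1}(x), g(x)) < ε. Then there is a sequence (g_i) with g_i ∈ K_i for every i and a homeomorphism φ : X → lim(X_i, g_i) such that φ(A) = { y ∈ lim(X_i, g_i) : y_i ∈ A_i for all i }. -/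

import Mathlib

open Filter Topology
set_option linter.unusedSectionVars false
set_option maxHeartbeats 1000000

namespace BrownAux
variable {X : ℕ → Type} [∀ n, MetricSpace (X n)]

variable {X : ℕ → Type} [∀ n, MetricSpace (X n)]

/-- composite of bonding maps from level `m` down to level `n` -/
def comp (F : ∀ n, X (n + 1) → X n) (n m : ℕ) (h : n ≤ m) : X m → X n :=
  Nat.leRecOn h (fun {k} (c : X k → X n) => c ∘ F k) id

lemma comp_self (F : ∀ n, X (n + 1) → X n) (n : ℕ) (h : n ≤ n) (x : X n) :
    comp F n n h x = x := by
  unfold comp; rw [Nat.leRecOn_self]; rfl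

lemma comp_succ (F : ∀ n, X (n + 1) → X n) (n m : ℕ) (h : n ≤ m) (h' : n ≤ m + 1)
    (x : X (m + 1)) : comp F n (m + 1) h' x = comp F n m h (F m x) := by
  unfold comp; rw [Nat.leRecOn_succ h]; rfl

lemma comp_front (F : ∀ n, X (n + 1) → X n) (n m : ℕ) (h : n + 1 ≤ m) (h' : n ≤ m)
    (x : X m) : comp F n m h' x = F n (comp F (n + 1) m h x) := by
  induction m, h using Nat.le_induction with
  | base => rw [comp_succ F n n le_rfl, comp_self, comp_self]
  | succ m hm ih =>
      rw [comp_succ F n m (by omega), comp_succ F (n+1) m hm, ih]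

lemma comp_continuous (F : ∀ n, X (n + 1) → X n) (hF : ∀ k, Continuous (F k))
    (n m : ℕ) (h : n ≤ m) : Continuous (comp F n m h) := by
  induction m, h using Nat.le_induction with
  | base => exact continuous_id.congr fun x => (comp_self F n _ x).symm
  | succ m hm ih =>
      exact (ih.comp (hF m)).congr fun x => (comp_succ F n m hm _ x).symm

lemma comp_mapsTo (F : ∀ n, X (n + 1) → X n) (A : ∀ n, Set (X n))
    (hF : ∀ k, Set.MapsTo (F k) (A (k + 1)) (A k)) (n m : ℕ) (h : n ≤ m) :
    Set.MapsTo (comp F n m h) (A m) (A n) := by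
  induction m, h using Nat.le_induction with
  | base => intro x hx; rw [comp_self]; exact hx
  | succ m hm ih =>
      intro x hx
      rw [comp_succ F n m hm]
      exact ih (hF m hx)

lemma comp_congr (F G : ∀ n, X (n + 1) → X n) (n m : ℕ) (h : n ≤ m)
    (hFG : ∀ k, k < m → F k = G k) (x : X m) : comp F n m h x = comp G n m h x := by
  induction m, h using Nat.le_induction with
  | base => rw [comp_self, comp_self]
  | succ m hm ih =>
      rw [comp_succ F n m hm, comp_succ G n m hm, hFG m (by omega),
        ih (fun k hk => hFG k (by omega))]

lemma comp_eval (F : ∀ n, X (n + 1) → X n) (x : ∀ n, X n)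
    (hx : ∀ k, F k (x (k + 1)) = x k) (n m : ℕ) (h : n ≤ m) :
    comp F n m h (x m) = x n := by
  induction m, h using Nat.le_induction with
  | base => rw [comp_self]
  | succ m hm ih => rw [comp_succ F n m hm, hx m, ih]

lemma exists_modulus [∀ n, CompactSpace (X n)] (j : ℕ) (u : ∀ n, n ≤ j → (X j → X n))
    (hu : ∀ n h, Continuous (u n h)) (ε : ℝ) (hε : 0 < ε) :
    ∃ δ > 0, ∀ n (h : n ≤ j), ∀ a b : X j, dist a b ≤ δ → dist (u n h a) (u n h b) ≤ ε := by
  have H : ∀ n : ℕ, ∃ δ > 0, ∀ (h : n ≤ j), ∀ a b : X j,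
      dist a b ≤ δ → dist (u n h a) (u n h b) ≤ ε := by
    intro n
    by_cases hn : n ≤ j
    · have huc := CompactSpace.uniformContinuous_of_continuous (hu n hn)
      rw [Metric.uniformContinuous_iff] at huc
      obtain ⟨δ, hδ, hδ'⟩ := huc ε hε
      refine ⟨δ / 2, by linarith, fun h a b hab => ?_⟩
      have : u n h = u n hn := rfl
      rw [this]
      exact le_of_lt (hδ' (lt_of_le_of_lt hab (by linarith)))
    · exact ⟨1, one_pos, fun h => absurd h hn⟩
  choose δ hδpos hδ using H
  refine ⟨(Finset.Iic j).inf' ⟨j, by simp⟩ δ, ?_, ?_⟩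
  · exact (Finset.lt_inf'_iff _).2 fun i _ => hδpos i
  · intro n h a b hab
    exact hδ n h a b (hab.trans (Finset.inf'_le δ (by simp [h])))


structure Good (f : ∀ n, X (n + 1) → X n) (K : ∀ i, Set (X (i + 1) → X i)) (j : ℕ)
    (p : (∀ i, X (i + 1) → X i) × (ℕ → ℝ)) : Prop where
  mem : ∀ i, p.1 i ∈ K i
  pos : ∀ i, 0 < p.2 i
  small : ∀ i, i < j → p.2 i ≤ (1/2 : ℝ) ^ i
  half : ∀ i, i + 1 < j → p.2 (i + 1) ≤ p.2 i / 2
  mod : ∀ i, i < j → ∀ n (h : n ≤ i), ∀ u v : X i, dist u v ≤ p.2 i →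
      dist (comp f n i h u) (comp f n i h v) ≤ (1/2 : ℝ) ^ i ∧
      dist (comp p.1 n i h u) (comp p.1 n i h v) ≤ (1/2 : ℝ) ^ i
  app : ∀ i, i < j → ∀ n (h : n ≤ i), ∀ x : X (i + 1),
      dist (comp f n i h (f i x)) (comp f n i h (p.1 i x)) ≤ p.2 i / 2 ∧
      dist (comp p.1 n i h (f i x)) (comp p.1 n i h (p.1 i x)) ≤ p.2 i / 2

lemma good_zero (f : ∀ n, X (n + 1) → X n) (K : ∀ i, Set (X (i + 1) → X i))
    (hKne : ∀ i, (K i).Nonempty) :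
    Good f K 0 (fun i => (hKne i).choose, fun _ => 1) :=
  ⟨fun i => (hKne i).choose_spec, fun _ => one_pos,
   fun i hi => absurd hi (Nat.not_lt_zero i), fun i hi => absurd hi (Nat.not_lt_zero _),
   fun i hi => absurd hi (Nat.not_lt_zero i), fun i hi => absurd hi (Nat.not_lt_zero i)⟩

lemma good_step [∀ n, CompactSpace (X n)]
    (f : ∀ n, X (n + 1) → X n) (K : ∀ i, Set (X (i + 1) → X i))
    (hf : ∀ n, Continuous (f n)) (hKc : ∀ i, ∀ g ∈ K i, Continuous g)
    (happrox : ∀ i, ∀ ε > (0 : ℝ), ∃ g ∈ K i, ∀ x, dist (f i x) (g x) < ε)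
    (j : ℕ) (p : (∀ i, X (i + 1) → X i) × (ℕ → ℝ)) (hp : Good f K j p) :
    ∃ q, Good f K (j + 1) q ∧ ∀ i, i ≠ j → q.1 i = p.1 i ∧ q.2 i = p.2 i := by
  have hgc : ∀ k, Continuous (p.1 k) := fun k => hKc k _ (hp.mem k)
  obtain ⟨δ₁, hδ₁pos, hδ₁⟩ := exists_modulus j (fun n h => comp f n j h)
      (fun n h => comp_continuous f hf n j h) ((1/2 : ℝ) ^ j) (by positivity)
  obtain ⟨δ₂, hδ₂pos, hδ₂⟩ := exists_modulus j (fun n h => comp p.1 n j h)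
      (fun n h => comp_continuous p.1 hgc n j h) ((1/2 : ℝ) ^ j) (by positivity)
  set e : ℝ := min (min δ₁ δ₂) (min ((1/2 : ℝ) ^ j) (p.2 (j - 1) / 2)) with he
  have hepos : 0 < e := by
    have := hp.pos (j - 1)
    simp only [he, lt_min_iff]
    refine ⟨⟨hδ₁pos, hδ₂pos⟩, by positivity, by linarith⟩
  obtain ⟨δ₃, hδ₃pos, hδ₃⟩ := exists_modulus j (fun n h => comp f n j h)
      (fun n h => comp_continuous f hf n j h) (e / 2) (by linarith)
  obtain ⟨δ₄, hδ₄pos, hδ₄⟩ := exists_modulus j (fun n h => comp p.1 n j h)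
      (fun n h => comp_continuous p.1 hgc n j h) (e / 2) (by linarith)
  obtain ⟨gj, hgjK, hgj⟩ := happrox j (min δ₃ δ₄) (lt_min hδ₃pos hδ₄pos)
  refine ⟨(Function.update p.1 j gj, Function.update p.2 j e), ?_,
    fun i hi => ⟨Function.update_of_ne hi _ _, Function.update_of_ne hi _ _⟩⟩
  have hq1 : ∀ k, k < j → Function.update p.1 j gj k = p.1 k :=
    fun k hk => Function.update_of_ne (Nat.ne_of_lt hk) _ _
  have hcompq : ∀ i, i ≤ j → ∀ n (h : n ≤ i) (x : X i),
      comp (Function.update p.1 j gj) n i h x = comp p.1 n i h x :=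
    fun i hij n h x => comp_congr _ _ n i h (fun k hk => hq1 k (by omega)) x
  constructor
  · intro i
    dsimp only
    by_cases hij : i = j
    · subst hij; rw [Function.update_self]; exact hgjK
    · rw [Function.update_of_ne hij]; exact hp.mem i
  · intro i
    dsimp only
    by_cases hij : i = j
    · subst hij; rw [Function.update_self]; exact hepos
    · rw [Function.update_of_ne hij]; exact hp.pos i
  · intro i hi
    dsimp only
    by_cases hij : i = j
    · subst hij; rw [Function.update_self]
      exact le_trans (min_le_right _ _) (min_le_left _ _)
    · rw [Function.update_of_ne hij]; exact hp.small i (by omega)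
  · intro i hi
    dsimp only
    have hi' : i + 1 ≤ j := by omega
    rcases eq_or_lt_of_le hi' with h' | h'
    · subst h'
      rw [Function.update_self, Function.update_of_ne (by omega)]
      have : e ≤ p.2 (i + 1 - 1) / 2 := le_trans (min_le_right _ _) (min_le_right _ _)
      simpa using this
    · rw [Function.update_of_ne (by omega), Function.update_of_ne (by omega)]
      exact hp.half i (by omega)
  · intro i hi n h u v huv
    dsimp only at huv ⊢
    by_cases hij : i = j
    · subst hij
      rw [Function.update_self] at huv
      refine ⟨hδ₁ n h u v (huv.trans (le_trans (min_le_left _ _) (min_le_left _ _))), ?_⟩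
      rw [hcompq _ le_rfl n h u, hcompq _ le_rfl n h v]
      exact hδ₂ n h u v (huv.trans (le_trans (min_le_left _ _) (min_le_right _ _)))
    · have hij' : i < j := by omega
      rw [Function.update_of_ne hij] at huv
      rw [hcompq i hij'.le n h u, hcompq i hij'.le n h v]
      exact hp.mod i hij' n h u v huv
  · intro i hi n h x
    dsimp only
    by_cases hij : i = j
    · subst hij
      rw [Function.update_self, Function.update_self]
      have hd : dist (f i x) (gj x) ≤ δ₃ ∧ dist (f i x) (gj x) ≤ δ₄ :=
        ⟨le_of_lt (lt_of_lt_of_le (hgj x) (min_le_left _ _)),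
         le_of_lt (lt_of_lt_of_le (hgj x) (min_le_right _ _))⟩
      refine ⟨hδ₃ n h _ _ hd.1, ?_⟩
      rw [hcompq _ le_rfl n h (f i x), hcompq _ le_rfl n h (gj x)]
      exact hδ₄ n h _ _ hd.2
    · have hij' : i < j := by omega
      rw [Function.update_of_ne hij, Function.update_of_ne hij,
        hcompq i hij'.le n h (f i x),
        hcompq i hij'.le n h (p.1 i x)]
      exact hp.app i hij' n h x


variable [∀ n, CompactSpace (X n)]

noncomputable def Q (f : ∀ n, X (n + 1) → X n) (K : ∀ i, Set (X (i + 1) → X i))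
    (hf : ∀ n, Continuous (f n)) (hKne : ∀ i, (K i).Nonempty)
    (hKc : ∀ i, ∀ g ∈ K i, Continuous g)
    (happrox : ∀ i, ∀ ε > (0 : ℝ), ∃ g ∈ K i, ∀ x, dist (f i x) (g x) < ε) :
    ∀ j, {p : (∀ i, X (i + 1) → X i) × (ℕ → ℝ) // Good f K j p}
  | 0 => ⟨_, good_zero f K hKne⟩
  | (j + 1) =>
      ⟨_, (good_step f K hf hKc happrox j (Q f K hf hKne hKc happrox j).1
        (Q f K hf hKne hKc happrox j).2).choose_spec.1⟩

lemma Q_succ_ne (f : ∀ n, X (n + 1) → X n) (K : ∀ i, Set (X (i + 1) → X i))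
    (hf : ∀ n, Continuous (f n)) (hKne : ∀ i, (K i).Nonempty)
    (hKc : ∀ i, ∀ g ∈ K i, Continuous g)
    (happrox : ∀ i, ∀ ε > (0 : ℝ), ∃ g ∈ K i, ∀ x, dist (f i x) (g x) < ε)
    (j i : ℕ) (hi : i ≠ j) :
    (Q f K hf hKne hKc happrox (j + 1)).1.1 i = (Q f K hf hKne hKc happrox j).1.1 i ∧
    (Q f K hf hKne hKc happrox (j + 1)).1.2 i = (Q f K hf hKne hKc happrox j).1.2 i := by
  have := (good_step f K hf hKc happrox j (Q f K hf hKne hKc happrox j).1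
      (Q f K hf hKne hKc happrox j).2).choose_spec.2 i hi
  rw [Q]
  exact this

lemma Q_mono (f : ∀ n, X (n + 1) → X n) (K : ∀ i, Set (X (i + 1) → X i))
    (hf : ∀ n, Continuous (f n)) (hKne : ∀ i, (K i).Nonempty)
    (hKc : ∀ i, ∀ g ∈ K i, Continuous g)
    (happrox : ∀ i, ∀ ε > (0 : ℝ), ∃ g ∈ K i, ∀ x, dist (f i x) (g x) < ε)
    (i j j' : ℕ) (h : j ≤ j') (hi : i < j) :
    (Q f K hf hKne hKc happrox j').1.1 i = (Q f K hf hKne hKc happrox j).1.1 i ∧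
    (Q f K hf hKne hKc happrox j').1.2 i = (Q f K hf hKne hKc happrox j).1.2 i := by
  induction j', h using Nat.le_induction with
  | base => exact ⟨rfl, rfl⟩
  | succ j' hj' ih =>
      have hne : i ≠ j' := by omega
      obtain ⟨h1, h2⟩ := Q_succ_ne f K hf hKne hKc happrox j' i hne
      exact ⟨h1.trans ih.1, h2.trans ih.2⟩

lemma choice_lemma (f : ∀ n, X (n + 1) → X n) (K : ∀ i, Set (X (i + 1) → X i))
    (hf : ∀ n, Continuous (f n)) (hKne : ∀ i, (K i).Nonempty)
    (hKc : ∀ i, ∀ g ∈ K i, Continuous g)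
    (happrox : ∀ i, ∀ ε > (0 : ℝ), ∃ g ∈ K i, ∀ x, dist (f i x) (g x) < ε) :
    ∃ (g : ∀ n, X (n + 1) → X n) (η : ℕ → ℝ),
      (∀ i, g i ∈ K i) ∧ (∀ j, 0 < η j) ∧ (∀ j, η (j + 1) ≤ η j / 2) ∧
      (∀ j, η j ≤ (1/2 : ℝ) ^ j) ∧
      (∀ j n (h : n ≤ j), ∀ u v : X j, dist u v ≤ η j →
        dist (comp f n j h u) (comp f n j h v) ≤ (1/2 : ℝ) ^ j ∧
        dist (comp g n j h u) (comp g n j h v) ≤ (1/2 : ℝ) ^ j) ∧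
      (∀ j n (h : n ≤ j), ∀ x : X (j + 1),
        dist (comp f n j h (f j x)) (comp f n j h (g j x)) ≤ η j / 2 ∧
        dist (comp g n j h (f j x)) (comp g n j h (g j x)) ≤ η j / 2) := by
  set Q' := Q f K hf hKne hKc happrox with hQ'
  refine ⟨fun i => (Q' (i + 1)).1.1 i, fun j => (Q' (j + 1)).1.2 j, ?_, ?_, ?_, ?_, ?_, ?_⟩
  · exact fun i => (Q' (i + 1)).2.mem i
  · exact fun j => (Q' (j + 1)).2.pos j
  · intro j
    have h4 := (Q' (j + 2)).2.half j (by omega)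
    have e1 : (Q' (j + 2)).1.2 j = (Q' (j + 1)).1.2 j :=
      (Q_mono f K hf hKne hKc happrox j (j + 1) (j + 2) (by omega) (by omega)).2
    rw [e1] at h4
    exact h4
  · exact fun j => (Q' (j + 1)).2.small j (by omega)
  · intro j n h u v huv
    have hm := (Q' (j + 1)).2.mod j (by omega) n h u v huv
    refine ⟨hm.1, ?_⟩
    have hc : ∀ (x : X j), comp (Q' (j + 1)).1.1 n j h x =
        comp (fun i => (Q' (i + 1)).1.1 i) n j h x := by
      intro x
      refine comp_congr _ _ n j h (fun k hk => ?_) x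
      exact (Q_mono f K hf hKne hKc happrox k (k + 1) (j + 1) (by omega) (by omega)).1
    rw [← hc u, ← hc v]
    exact hm.2
  · intro j n h x
    have hm := (Q' (j + 1)).2.app j (by omega) n h x
    have hc : ∀ (y : X j), comp (Q' (j + 1)).1.1 n j h y =
        comp (fun i => (Q' (i + 1)).1.1 i) n j h y := by
      intro y
      refine comp_congr _ _ n j h (fun k hk => ?_) y
      exact (Q_mono f K hf hKne hKc happrox k (k + 1) (j + 1) (by omega) (by omega)).1
    simp only [hc] at hm
    exact hm


variable [∀ n, CompactSpace (X n)]
lemma T_exists (A : ∀ n, Set (X n)) (hA : ∀ n, IsClosed (A n))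
    (u v : ∀ n, X (n + 1) → X n) (hv : ∀ n, Continuous (v n))
    (hvA : ∀ n, Set.MapsTo (v n) (A (n + 1)) (A n))
    (η : ℕ → ℝ) (hηpos : ∀ j, 0 < η j) (hanti : Antitone η)
    (hη0 : Tendsto η atTop (𝓝 0))
    (hhalf : ∀ j, η j / 2 ≤ η j - η (j + 1))
    (happ : ∀ j n (h : n ≤ j), ∀ x : X (j + 1),
        dist (comp v n j h (u j x)) (comp v n j h (v j x)) ≤ η j / 2) :
    ∃ T : {x : ∀ n, X n // ∀ n, u n (x (n + 1)) = x n} →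
        {y : ∀ n, X n // ∀ n, v n (y (n + 1)) = y n},
      (∀ x n m (h : n ≤ m), dist (comp v n m h (x.1 m)) ((T x).1 n) ≤ η m) ∧
      Continuous T ∧
      (∀ x, (∀ n, x.1 n ∈ A n) → ∀ n, (T x).1 n ∈ A n) := by
  set Xu := {x : ∀ n, X n // ∀ n, u n (x (n + 1)) = x n} with hXu
  set S : Xu → ∀ n : ℕ, ℕ → X n :=
    fun x n m => if h : n ≤ m then comp v n m h (x.1 m) else x.1 n with hS
  have hSpos : ∀ (x : Xu) n m (h : n ≤ m), S x n m = comp v n m h (x.1 m) :=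
    fun x n m h => dif_pos h
  have hSneg : ∀ (x : Xu) n m, ¬ n ≤ m → S x n m = x.1 n := fun x n m h => dif_neg h
  have hSnn : ∀ (x : Xu) n, S x n n = x.1 n :=
    fun x n => (hSpos x n n le_rfl).trans (comp_self v n le_rfl (x.1 n))
  have hstep : ∀ (x : Xu) n m (h : n ≤ m), dist (S x n m) (S x n (m + 1)) ≤ η m / 2 := by
    intro x n m h
    rw [hSpos x n m h, hSpos x n (m + 1) (h.trans (Nat.le_succ m)),
      comp_succ v n m h, ← x.2 m]
    exact happ m n h (x.1 (m + 1))
  have hsum : ∀ (x : Xu) n m (h : n ≤ m) (l : ℕ),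
      dist (S x n m) (S x n (m + l)) ≤ η m - η (m + l) := by
    intro x n m h l
    induction l with
    | zero => simp
    | succ l ih =>
        have h1 := hstep x n (m + l) (h.trans (Nat.le_add_right m l))
        have h2 := hhalf (m + l)
        calc dist (S x n m) (S x n (m + (l + 1)))
            ≤ dist (S x n m) (S x n (m + l)) + dist (S x n (m + l)) (S x n (m + l + 1)) := by
              rw [show m + (l + 1) = m + l + 1 by omega]; exact dist_triangle _ _ _
          _ ≤ (η m - η (m + l)) + η (m + l) / 2 := add_le_add ih h1
          _ ≤ η m - η (m + (l + 1)) := by rw [show m + (l + 1) = m + l + 1 by omega]; linarith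
  have hbound : ∀ (x : Xu) n m m', n ≤ m → m ≤ m' → dist (S x n m) (S x n m') ≤ η m := by
    intro x n m m' h hm
    obtain ⟨l, rfl⟩ := Nat.exists_eq_add_of_le hm
    have h1 := hsum x n m h l
    have h2 := hηpos (m + l)
    linarith
  have hcauchy : ∀ (x : Xu) n, CauchySeq (S x n) := by
    intro x n
    apply cauchySeq_of_le_tendsto_0 (fun N => η (max n N))
    · have key : ∀ m m' N, N ≤ m → N ≤ m' → m ≤ m' →
          dist (S x n m) (S x n m') ≤ η (max n N) := by
        intro m m' N hm hm' hmm
        by_cases hnm : n ≤ m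
        · exact (hbound x n m m' hnm hmm).trans (hanti (max_le hnm hm))
        · push_neg at hnm
          rw [hSneg x n m (by omega), ← hSnn x n]
          rw [show max n N = n from max_eq_left (by omega)]
          by_cases hnm' : n ≤ m'
          · exact hbound x n n m' le_rfl hnm'
          · rw [hSneg x n m' (by omega), hSnn x n, dist_self]
            exact (hηpos n).le
      intro m m' N hm hm'
      rcases le_total m m' with hmm | hmm
      · exact key m m' N hm hm' hmm
      · rw [dist_comm]; exact key m' m N hm' hm hmm
    · have hmax : Tendsto (fun N => max n N) atTop atTop :=
        tendsto_atTop_mono (fun N => le_max_right n N) tendsto_id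
      exact hη0.comp hmax
  have hconv : ∀ (x : Xu) n, ∃ L, Tendsto (S x n) atTop (𝓝 L) :=
    fun x n => cauchySeq_tendsto_of_complete (hcauchy x n)
  choose Φ hΦ using hconv
  have hdist : ∀ (x : Xu) n m (h : n ≤ m), dist (comp v n m h (x.1 m)) (Φ x n) ≤ η m := by
    intro x n m h
    rw [← hSpos x n m h]
    have tl : Tendsto (fun m' => dist (S x n m) (S x n m')) atTop
        (𝓝 (dist (S x n m) (Φ x n))) := tendsto_const_nhds.dist (hΦ x n)
    exact le_of_tendsto tl (eventually_atTop.2 ⟨m, fun m' hm' => hbound x n m m' h hm'⟩)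
  have hcompat : ∀ (x : Xu) n, v n (Φ x (n + 1)) = Φ x n := by
    intro x n
    have t1 : Tendsto (fun m => v n (S x (n + 1) m)) atTop (𝓝 (v n (Φ x (n + 1)))) :=
      ((hv n).tendsto _).comp (hΦ x (n + 1))
    have heq : ∀ᶠ m in atTop, v n (S x (n + 1) m) = S x n m := by
      filter_upwards [eventually_ge_atTop (n + 1)] with m hm
      rw [hSpos x (n + 1) m hm, hSpos x n m ((Nat.le_succ n).trans hm),
        comp_front v n m hm]
    exact tendsto_nhds_unique (t1.congr' heq) (hΦ x n)
  have hmaps : ∀ (x : Xu), (∀ n, x.1 n ∈ A n) → ∀ n, Φ x n ∈ A n := by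
    intro x hx n
    refine (hA n).mem_of_tendsto (hΦ x n) ?_
    filter_upwards [eventually_ge_atTop n] with m hm
    rw [hSpos x n m hm]
    exact comp_mapsTo v A hvA n m hm (hx m)
  have hScont : ∀ n m, Continuous fun x : Xu => S x n m := by
    intro n m
    by_cases h : n ≤ m
    · have he : (fun x : Xu => S x n m) = fun x => comp v n m h (x.1 m) :=
        funext fun x => hSpos x n m h
      rw [he]
      exact (comp_continuous v hv n m h).comp ((continuous_apply m).comp continuous_subtype_val)
    · have he : (fun x : Xu => S x n m) = fun x => x.1 n := funext fun x => hSneg x n m h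
      rw [he]
      exact (continuous_apply n).comp continuous_subtype_val
  have hPhicont : ∀ n, Continuous fun x : Xu => Φ x n := by
    intro n
    have htu : TendstoUniformly (fun m (x : Xu) => S x n m) (fun x => Φ x n) atTop := by
      rw [Metric.tendstoUniformly_iff]
      intro ε hε
      filter_upwards [hη0.eventually (gt_mem_nhds hε), eventually_ge_atTop n] with m hm hnm x
      have h1 := hdist x n m hnm
      rw [← hSpos x n m hnm] at h1
      rw [dist_comm] at h1
      exact lt_of_le_of_lt h1 hm
    exact htu.continuous (Frequently.of_forall (hScont n))
  refine ⟨fun x => ⟨fun n => Φ x n, hcompat x⟩, hdist, ?_, hmaps⟩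
  exact Continuous.subtype_mk (continuous_pi hPhicont) _

end BrownAux

/-- Brown's approximation theorem for pairs: if each bonding map `f_{i+1}` of an inverse
sequence of pairs of compact metric spaces can be approximated arbitrarily well by maps
from a nonempty collection `K_i` of maps of pairs, then one may choose `g_i ∈ K_i` so
that the two inverse limits are homeomorphic via a homeomorphism carrying the inverse
limit of the `A_i` along `f` to the inverse limit of the `A_i` along `g`. -/
theorem brown_approximation_inverse_limit_pairs
    (X : ℕ → Type) [∀ n, MetricSpace (X n)] [∀ n, CompactSpace (X n)]
    (A : ∀ n, Set (X n)) (hA : ∀ n, IsCompact (A n))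
    (f : ∀ n, X (n + 1) → X n) (hf : ∀ n, Continuous (f n))
    (hfA : ∀ n, Set.MapsTo (f n) (A (n + 1)) (A n))
    (K : ∀ i, Set (X (i + 1) → X i))
    (hKne : ∀ i, (K i).Nonempty)
    (hKpair : ∀ i, ∀ g ∈ K i, Continuous g ∧ Set.MapsTo g (A (i + 1)) (A i))
    (happrox : ∀ i, ∀ ε > (0 : ℝ), ∃ g ∈ K i, ∀ x, dist (f i x) (g x) < ε) :
    ∃ g : ∀ n, X (n + 1) → X n, (∀ i, g i ∈ K i) ∧
      ∃ φ : {x : ∀ n, X n // ∀ n, f n (x (n + 1)) = x n} ≃ₜ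
          {y : ∀ n, X n // ∀ n, g n (y (n + 1)) = y n},
        φ '' {x | ∀ n, x.1 n ∈ A n} = {y | ∀ n, y.1 n ∈ A n} := by
  classical
  obtain ⟨g, η, hg, hpos, hhalfη, hsmall, hmod, happ⟩ :=
    BrownAux.choice_lemma f K hf hKne (fun i g hgK => (hKpair i g hgK).1) happrox
  have hgc : ∀ n, Continuous (g n) := fun n => (hKpair n _ (hg n)).1
  have hgA : ∀ n, Set.MapsTo (g n) (A (n + 1)) (A n) := fun n => (hKpair n _ (hg n)).2
  have hanti : Antitone η := antitone_nat_of_succ_le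
    (fun j => le_trans (hhalfη j) (by linarith [hpos j]))
  have hpow0 : Tendsto (fun m : ℕ => (1/2 : ℝ) ^ m) atTop (𝓝 0) :=
    tendsto_pow_atTop_nhds_zero_of_lt_one (by norm_num) (by norm_num)
  have hη0 : Tendsto η atTop (𝓝 0) :=
    squeeze_zero (fun j => (hpos j).le) hsmall hpow0
  have hhalf' : ∀ j, η j / 2 ≤ η j - η (j + 1) := fun j => by
    have := hhalfη j; linarith
  have hAc : ∀ n, IsClosed (A n) := fun n => (hA n).isClosed
  obtain ⟨T₁, hT₁d, hT₁c, hT₁A⟩ := BrownAux.T_exists A hAc f g hgc hgA η hpos hanti hη0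
    hhalf' (fun j n h x => (happ j n h x).2)
  obtain ⟨T₂, hT₂d, hT₂c, hT₂A⟩ := BrownAux.T_exists A hAc g f hf hfA η hpos hanti hη0
    hhalf' (fun j n h x => by have := (happ j n h x).1; rwa [dist_comm] at this)
  have hpow : Tendsto (fun m : ℕ => η m + (1/2 : ℝ) ^ m) atTop (𝓝 0) := by
    simpa using hη0.add hpow0
  have hinv1 : ∀ x, T₂ (T₁ x) = x := by
    intro x
    apply Subtype.ext; funext n
    have hd : ∀ m, n ≤ m → dist ((T₂ (T₁ x)).1 n) (x.1 n) ≤ η m + (1/2 : ℝ) ^ m := by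
      intro m hm
      have h1 : dist (BrownAux.comp f n m hm ((T₁ x).1 m)) ((T₂ (T₁ x)).1 n) ≤ η m :=
        hT₂d (T₁ x) n m hm
      have h2 : dist ((T₁ x).1 m) (x.1 m) ≤ η m := by
        have h := hT₁d x m m le_rfl
        rw [BrownAux.comp_self] at h
        rwa [dist_comm] at h
      have h3 := (hmod m n hm ((T₁ x).1 m) (x.1 m) h2).1
      rw [BrownAux.comp_eval f x.1 x.2 n m hm] at h3
      calc dist ((T₂ (T₁ x)).1 n) (x.1 n)
          ≤ dist ((T₂ (T₁ x)).1 n) (BrownAux.comp f n m hm ((T₁ x).1 m)) +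
            dist (BrownAux.comp f n m hm ((T₁ x).1 m)) (x.1 n) := dist_triangle _ _ _
        _ ≤ η m + (1/2 : ℝ) ^ m := add_le_add (by rwa [dist_comm] at h1) h3
    have h0 : dist ((T₂ (T₁ x)).1 n) (x.1 n) ≤ 0 :=
      ge_of_tendsto hpow (eventually_atTop.2 ⟨n, hd⟩)
    exact eq_of_dist_eq_zero (le_antisymm h0 dist_nonneg)
  have hinv2 : ∀ y, T₁ (T₂ y) = y := by
    intro y
    apply Subtype.ext; funext n
    have hd : ∀ m, n ≤ m → dist ((T₁ (T₂ y)).1 n) (y.1 n) ≤ η m + (1/2 : ℝ) ^ m := by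
      intro m hm
      have h1 : dist (BrownAux.comp g n m hm ((T₂ y).1 m)) ((T₁ (T₂ y)).1 n) ≤ η m :=
        hT₁d (T₂ y) n m hm
      have h2 : dist ((T₂ y).1 m) (y.1 m) ≤ η m := by
        have h := hT₂d y m m le_rfl
        rw [BrownAux.comp_self] at h
        rwa [dist_comm] at h
      have h3 := (hmod m n hm ((T₂ y).1 m) (y.1 m) h2).2
      rw [BrownAux.comp_eval g y.1 y.2 n m hm] at h3
      calc dist ((T₁ (T₂ y)).1 n) (y.1 n)
          ≤ dist ((T₁ (T₂ y)).1 n) (BrownAux.comp g n m hm ((T₂ y).1 m)) +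
            dist (BrownAux.comp g n m hm ((T₂ y).1 m)) (y.1 n) := dist_triangle _ _ _
        _ ≤ η m + (1/2 : ℝ) ^ m := add_le_add (by rwa [dist_comm] at h1) h3
    have h0 : dist ((T₁ (T₂ y)).1 n) (y.1 n) ≤ 0 :=
      ge_of_tendsto hpow (eventually_atTop.2 ⟨n, hd⟩)
    exact eq_of_dist_eq_zero (le_antisymm h0 dist_nonneg)
  refine ⟨g, hg, Homeomorph.mk ⟨T₁, T₂, hinv1, hinv2⟩ hT₁c hT₂c, ?_⟩
  ext y
  simp only [Set.mem_image, Set.mem_setOf_eq]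
  constructor
  · rintro ⟨x, hx, rfl⟩
    exact fun n => hT₁A x hx n
  · intro hy
    exact ⟨T₂ y, fun n => hT₂A y hy n, hinv2 y⟩
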